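/- Let h : ℝᵈ → ℝ be convex and C_h-Lipschitz with Moreau envelope h(·;μ). Given constants c ∈ ℝᵈ, μ > 0, ρ > 0, let x̄ = argmin_x h(x;μ) + (ρ/2)‖x−c‖². Then x̄ = (μ/(1+μρ))·((1/μ)x̆ + ρc), where x̆ = argmin_v h(v) + (1/2)·(ρ/(1+μρ))‖v−c‖². -/

import Mathlib

open RealInnerProductSpace in
lemma stmt_11_key_id {E : Type*} [NormedAddCommGroup E] [InnerProductSpace ℝ E]
    (μ ρ : ℝ) (hμ : 0 < μ) (hρ : 0 < ρ) (c x v : E) :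
    (1/(2*μ))*‖v - x‖^2 + (ρ/2)*‖x - c‖^2
    = ((1/μ+ρ)/2)*‖x - ((1+μ*ρ)⁻¹ • v + (μ*ρ*(1+μ*ρ)⁻¹) • c)‖^2
      + (ρ*(1+μ*ρ)⁻¹/2)*‖v - c‖^2 := by
  have hne : (1+μ*ρ) ≠ 0 := by positivity
  have h1 : v - x = (v - c) - (x - c) := by abel
  have h2 : x - ((1+μ*ρ)⁻¹ • v + (μ*ρ*(1+μ*ρ)⁻¹) • c)
      = (x - c) - (1+μ*ρ)⁻¹ • (v - c) := by
    match_scalars <;> field_simp <;> ring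
  rw [h1, h2, norm_sub_sq_real, norm_sub_sq_real (x - c)]
  rw [real_inner_smul_right, norm_smul, Real.norm_eq_abs, mul_pow, sq_abs,
    real_inner_comm (v - c) (x - c)]
  field_simp
  ring

open RealInnerProductSpace in
lemma stmt_11_mid_norm_id {E : Type*} [NormedAddCommGroup E] [InnerProductSpace ℝ E]
    (c v w : E) :
    ‖((1/2:ℝ) • v + (1/2:ℝ) • w) - c‖^2
    = (1/2)*‖v - c‖^2 + (1/2)*‖w - c‖^2 - (1/4)*‖v - w‖^2 := by
  have h1 : ((1/2:ℝ) • v + (1/2:ℝ) • w) - c = (1/2:ℝ) • ((v - c) + (w - c)) := by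
    match_scalars <;> ring
  have h2 : v - w = (v - c) - (w - c) := by abel
  rw [h1, h2]
  generalize (v - c) = a
  generalize (w - c) = b
  rw [norm_smul, Real.norm_eq_abs, mul_pow, sq_abs, norm_add_sq_real, norm_sub_sq_real]
  ring


lemma stmt_11_beta_bound (ρ s β α p t r : ℝ) (hs : 0 < s)
    (hβ1 : β ≤ α/4) (hβ2 : β ≤ ρ/(8*s)) (hβ : 0 < β)
    (hp : 0 ≤ p) (ht : 0 ≤ t) (hr : 0 ≤ r) (htri : r ≤ p + s*t) :
    β * r^2 ≤ (α/2)*p^2 + (ρ*s/4)*t^2 := by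
  have hβs : 2*β*s^2 ≤ ρ*s/4 := by
    have h1 : β * s ≤ (ρ/(8*s)) * s := mul_le_mul_of_nonneg_right hβ2 hs.le
    have h2 : (ρ/(8*s)) * s = ρ/8 := by field_simp
    nlinarith
  have hsq : r^2 ≤ 2*p^2 + 2*s^2*t^2 := by
    nlinarith [sq_nonneg (p - s*t)]
  nlinarith [sq_nonneg p, sq_nonneg t, sq_nonneg r]

/-- The Moreau envelope of `h` with parameter `μ`. -/
noncomputable def moreauEnv {d : ℕ} (h : EuclideanSpace ℝ (Fin d) → ℝ) (μ : ℝ)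
    (u : EuclideanSpace ℝ (Fin d)) : ℝ :=
  ⨅ v : EuclideanSpace ℝ (Fin d), (h v + (1 / (2 * μ)) * ‖v - u‖^2)

set_option maxHeartbeats 1600000 in
theorem stmt_11 (d : ℕ) (h : EuclideanSpace ℝ (Fin d) → ℝ) (Ch : ℝ)
    (hconv : ConvexOn ℝ Set.univ h)
    (hlip : ∀ x y, |h x - h y| ≤ Ch * ‖x - y‖)
    (c : EuclideanSpace ℝ (Fin d)) (μ ρ : ℝ) (hμ : 0 < μ) (hρ : 0 < ρ)
    (xbar xbreve : EuclideanSpace ℝ (Fin d))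
    (hxbar : ∀ x, moreauEnv h μ xbar + (ρ/2) * ‖xbar - c‖^2 ≤
      moreauEnv h μ x + (ρ/2) * ‖x - c‖^2)
    (hxbreve : ∀ v, h xbreve + (1/2) * (ρ / (1 + μ * ρ)) * ‖xbreve - c‖^2 ≤
      h v + (1/2) * (ρ / (1 + μ * ρ)) * ‖v - c‖^2) :
    xbar = (μ / (1 + μ * ρ)) • ((1/μ) • xbreve + ρ • c) := by
  have hone : 0 < 1 + μ*ρ := by positivity
  have hne : (1 + μ*ρ) ≠ 0 := ne_of_gt hone
  obtain ⟨s, hs_def⟩ : ∃ t : ℝ, t = (1 + μ*ρ)⁻¹ := ⟨_, rfl⟩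
  have hs : 0 < s := hs_def ▸ inv_pos.mpr hone
  obtain ⟨α, hα_def⟩ : ∃ t : ℝ, t = 1/μ + ρ := ⟨_, rfl⟩
  have hα : 0 < α := by rw [hα_def]; positivity
  obtain ⟨φ, hφ_def⟩ : ∃ f : EuclideanSpace ℝ (Fin d) → EuclideanSpace ℝ (Fin d),
      f = fun v => s • v + (μ*ρ*s) • c := ⟨_, rfl⟩
  obtain ⟨xs, hxs_def⟩ : ∃ y : EuclideanSpace ℝ (Fin d),
      y = (μ / (1 + μ * ρ)) • ((1/μ) • xbreve + ρ • c) := ⟨_, rfl⟩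
  rw [← hxs_def]
  have hxsφ : xs = φ xbreve := by
    rw [hxs_def, hφ_def, hs_def]
    match_scalars <;> field_simp <;> ring
  -- key completing-the-square identity
  have hid : ∀ x v : EuclideanSpace ℝ (Fin d),
      (1/(2*μ))*‖v - x‖^2 + (ρ/2)*‖x - c‖^2
      = (α/2)*‖x - φ v‖^2 + (ρ*s/2)*‖v - c‖^2 := by
    intro x v
    rw [hα_def, hφ_def, hs_def]
    exact stmt_11_key_id μ ρ hμ hρ c x v
  -- reformulate hxbreve with coefficient ρ*s/2
  have hkcoe : ∀ v : EuclideanSpace ℝ (Fin d),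
      (1/2) * (ρ / (1 + μ * ρ)) * ‖v - c‖^2 = (ρ*s/2) * ‖v - c‖^2 := by
    intro v; rw [hs_def, div_eq_mul_inv]; ring
  have hbrev : ∀ v, h xbreve + (ρ*s/2) * ‖xbreve - c‖^2 ≤
      h v + (ρ*s/2) * ‖v - c‖^2 := by
    intro v; have := hxbreve v; rw [hkcoe, hkcoe] at this; exact this
  obtain ⟨m, hm_def⟩ : ∃ t : ℝ, t = h xbreve + (ρ*s/2) * ‖xbreve - c‖^2 := ⟨_, rfl⟩
  -- strong convexity lower bound via midpoint
  have hsc : ∀ v, m + (ρ*s/4) * ‖v - xbreve‖^2 ≤ h v + (ρ*s/2) * ‖v - c‖^2 := by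
    intro v
    have hcv := hconv.2 (Set.mem_univ v) (Set.mem_univ xbreve)
      (by norm_num : (0:ℝ) ≤ 1/2) (by norm_num : (0:ℝ) ≤ 1/2)
      (by norm_num : (1/2:ℝ) + 1/2 = 1)
    rw [smul_eq_mul, smul_eq_mul] at hcv
    have hnm := stmt_11_mid_norm_id c v xbreve
    have h1 := hbrev ((1/2:ℝ) • v + (1/2:ℝ) • xbreve)
    have hρs : 0 < ρ * s := by positivity
    rw [hm_def]
    nlinarith [h1, hcv, hnm]
  -- bounded below, uniformly, for ciInf_le
  have hbdd : ∀ u : EuclideanSpace ℝ (Fin d), BddBelow (Set.range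
      (fun v : EuclideanSpace ℝ (Fin d) => h v + (1 / (2 * μ)) * ‖v - u‖^2)) := by
    intro u
    refine ⟨h u - μ*Ch^2/2, ?_⟩
    rintro _ ⟨v, rfl⟩
    have habs : h u - h v ≤ Ch * ‖v - u‖ := by
      have := le_trans (le_abs_self _) (hlip u v)
      rwa [norm_sub_rev u v] at this
    have e1 : 1/(2*μ) * ‖v - u‖^2 + μ*Ch^2/2 - Ch*‖v - u‖
        = (‖v - u‖ - μ*Ch)^2 / (2*μ) := by field_simp; ring
    have e2 : (0:ℝ) ≤ (‖v - u‖ - μ*Ch)^2/(2*μ) := by positivity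
    simp only [ge_iff_le]
    linarith
  -- upper bound: F(xs) ≤ m
  have hup : moreauEnv h μ xs + (ρ/2) * ‖xs - c‖^2 ≤ m := by
    have hle : moreauEnv h μ xs ≤ h xbreve + (1 / (2 * μ)) * ‖xbreve - xs‖^2 :=
      ciInf_le (hbdd xs) xbreve
    have hval : h xbreve + ((1/(2*μ))*‖xbreve - xs‖^2 + (ρ/2)*‖xs - c‖^2) = m := by
      rw [hid xs xbreve, hxsφ, hm_def]
      simp
    linarith
  -- lower bound parameter
  obtain ⟨β, hβ_def⟩ : ∃ t : ℝ, t = min (α/4) (ρ/(8*s)) := ⟨_, rfl⟩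
  have hβ : 0 < β := by rw [hβ_def]; exact lt_min (by positivity) (by positivity)
  have hβ1 : β ≤ α/4 := hβ_def ▸ min_le_left _ _
  have hβ2 : β ≤ ρ/(8*s) := hβ_def ▸ min_le_right _ _
  -- lower bound: m + β‖xbar - xs‖² ≤ F(xbar)
  have hlow : m + β * ‖xbar - xs‖^2 ≤ moreauEnv h μ xbar + (ρ/2) * ‖xbar - c‖^2 := by
    have key : ∀ v : EuclideanSpace ℝ (Fin d),
        m + β * ‖xbar - xs‖^2 - (ρ/2) * ‖xbar - c‖^2
        ≤ h v + (1 / (2 * μ)) * ‖v - xbar‖^2 := by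
      intro v
      have hidv := hid xbar v
      have hscv := hsc v
      have htri : ‖xbar - xs‖ ≤ ‖xbar - φ v‖ + s * ‖v - xbreve‖ := by
        have hdecomp : xbar - xs = (xbar - φ v) + s • (v - xbreve) := by
          rw [hxsφ, hφ_def]
          match_scalars <;> ring
        calc ‖xbar - xs‖ = ‖(xbar - φ v) + s • (v - xbreve)‖ := by rw [hdecomp]
          _ ≤ ‖xbar - φ v‖ + ‖s • (v - xbreve)‖ := norm_add_le _ _
          _ = ‖xbar - φ v‖ + s * ‖v - xbreve‖ := by
              rw [norm_smul, Real.norm_eq_abs, abs_of_pos hs]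
      have hp : 0 ≤ ‖xbar - φ v‖ := norm_nonneg _
      have ht : 0 ≤ ‖v - xbreve‖ := norm_nonneg _
      have hr : 0 ≤ ‖xbar - xs‖ := norm_nonneg _
      have hβbound : β * ‖xbar - xs‖^2
          ≤ (α/2)*‖xbar - φ v‖^2 + (ρ*s/4)*‖v - xbreve‖^2 :=
        stmt_11_beta_bound ρ s β α _ _ _ hs hβ1 hβ2 hβ hp ht hr htri
      linarith
    have hinf : m + β * ‖xbar - xs‖^2 - (ρ/2) * ‖xbar - c‖^2 ≤ moreauEnv h μ xbar :=
      le_ciInf key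
    linarith
  have hchain := hxbar xs
  have hle : β * ‖xbar - xs‖^2 ≤ β * 0 := by
    rw [mul_zero]; linarith
  have h4 : ‖xbar - xs‖^2 ≤ 0 := le_of_mul_le_mul_left hle hβ
  have h6 : ‖xbar - xs‖^2 = 0 := le_antisymm h4 (sq_nonneg _)
  have hzero : ‖xbar - xs‖ = 0 := pow_eq_zero_iff two_ne_zero |>.mp h6
  exact sub_eq_zero.mp (norm_eq_zero.mp hzero)
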